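/- For every n ≥ 2 and for each of the two vectors v = ![0,0,0,1] and v = ![0,1,0,0] in Fin 4 → ℤ: ((B^n).mulVec v) 2 + ((B^n).mulVec v) 3 − ((B^(n−2)).mulVec v) 3 = 2^(n−1). -/

import Mathlib

def B : Matrix (Fin 4) (Fin 4) ℤ :=
  !![0, 0, 0, 1; 0, 1, 1, 0; 2, 1, 0, 0; 0, 0, 1, 1]

lemma B_step (u : Fin 4 → ℤ) :
    B.mulVec u = ![u 3, u 1 + u 2, 2 * u 0 + u 1, u 2 + u 3] := by
  funext i
  fin_cases i <;>
    simp [B, Matrix.mulVec, dotProduct, Fin.sum_univ_four] <;> ring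

lemma B_pow_step (v : Fin 4 → ℤ) (k : ℕ) :
    (B ^ (k + 1)).mulVec v = B.mulVec ((B ^ k).mulVec v) := by
  rw [pow_succ', ← Matrix.mulVec_mulVec]

lemma sum_pow (v : Fin 4 → ℤ) (hs : v 0 + v 1 + v 2 + v 3 = 1) (k : ℕ) :
    ((B ^ k).mulVec v) 0 + ((B ^ k).mulVec v) 1 + ((B ^ k).mulVec v) 2 +
      ((B ^ k).mulVec v) 3 = 2 ^ k := by
  induction k with
  | zero => simpa using hs
  | succ k ih =>
    rw [B_pow_step, B_step]
    simp only [Matrix.cons_val_zero, Matrix.cons_val_one, Matrix.head_cons,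
      Matrix.cons_val_two, Matrix.tail_cons, Matrix.cons_val_three]
    rw [pow_succ]
    linarith

lemma main_aux (v : Fin 4 → ℤ) (hs : v 0 + v 1 + v 2 + v 3 = 1) (m : ℕ) :
    ((B ^ (m + 2)).mulVec v) 2 + ((B ^ (m + 2)).mulVec v) 3 -
      ((B ^ m).mulVec v) 3 = 2 ^ (m + 1) := by
  have h2 : (B ^ (m + 2)).mulVec v = B.mulVec ((B ^ (m + 1)).mulVec v) := B_pow_step v (m + 1)
  have h1 : (B ^ (m + 1)).mulVec v = B.mulVec ((B ^ m).mulVec v) := B_pow_step v m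
  have hsum := sum_pow v hs (m + 1)
  have ha : ((B ^ (m + 1)).mulVec v) 0 = ((B ^ m).mulVec v) 3 := by
    rw [h1, B_step]; rfl
  rw [h2, B_step]
  simp only [Matrix.cons_val_two, Matrix.tail_cons, Matrix.head_cons,
    Matrix.cons_val_three, Matrix.cons_val_zero, Matrix.cons_val_one]
  linarith

theorem e_add_d_sub_e (n : ℕ) (hn : 2 ≤ n) :
    (((B ^ n).mulVec ![0, 0, 0, 1]) 2 + ((B ^ n).mulVec ![0, 0, 0, 1]) 3 -
        ((B ^ (n - 2)).mulVec ![0, 0, 0, 1]) 3 = 2 ^ (n - 1)) ∧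
    (((B ^ n).mulVec ![0, 1, 0, 0]) 2 + ((B ^ n).mulVec ![0, 1, 0, 0]) 3 -
        ((B ^ (n - 2)).mulVec ![0, 1, 0, 0]) 3 = 2 ^ (n - 1)) := by
  obtain ⟨m, rfl⟩ := Nat.exists_eq_add_of_le hn
  have e2 : 2 + m - 2 = m := by omega
  have e1 : 2 + m - 1 = m + 1 := by omega
  have e0 : 2 + m = m + 2 := by omega
  rw [e2, e1, e0]
  refine ⟨main_aux _ ?_ m, main_aux _ ?_ m⟩ <;> norm_num <;> rfl
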